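/- The 5-dimensional nilpotent commutative associative algebra A₁₃ does not degenerate to A₁₂: the structure λ of A₁₂ does NOT lie in the closure of the GL(5,ℂ)-orbit O(μ) of the structure μ of A₁₃ (closure in the standard topology on the space of bilinear maps ℂ⁵ × ℂ⁵ → ℂ⁵). -/

import Mathlib

open ContinuousLinearMap

/-- The underlying space `ℂⁿ`. -/
abbrev Vn (n : ℕ) := Fin n → ℂ

/-- The space of bilinear maps `ℂⁿ × ℂⁿ → ℂⁿ` (as continuous linear maps in two
arguments), carrying its standard topology as a finite-dimensional complex vector space. -/
abbrev Bil (n : ℕ) := Vn n →L[ℂ] Vn n →L[ℂ] Vn n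

/-- The action of `GL(n, ℂ)` on bilinear maps: `(g · μ)(x, y) = g (μ (g⁻¹ x) (g⁻¹ y))`. -/
noncomputable def act {n : ℕ} (g : Vn n ≃L[ℂ] Vn n) (μ : Bil n) : Bil n :=
  ((compL ℂ (Vn n) (Vn n) (Vn n)).flip (g.symm : Vn n →L[ℂ] Vn n)).comp
    (((compL ℂ (Vn n) (Vn n) (Vn n)) (g : Vn n →L[ℂ] Vn n)).comp
      (μ.comp (g.symm : Vn n →L[ℂ] Vn n)))

@[simp] lemma act_apply {n : ℕ} (g : Vn n ≃L[ℂ] Vn n) (μ : Bil n) (x y : Vn n) :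
    act g μ x y = g (μ (g.symm x) (g.symm y)) := rfl

/-- The orbit `O(μ)` of a bilinear map under the `GL(n, ℂ)`-action. -/
noncomputable def orbit {n : ℕ} (μ : Bil n) : Set (Bil n) :=
  {ν | ∃ g : Vn n ≃L[ℂ] Vn n, ν = act g μ}

/-- The standard basis `e₁, …, e₅` of `ℂ⁵` (zero-indexed: `e i` is `e_{i+1}`). -/
def e (i : Fin 5) : Vn 5 := Pi.single i 1

/-- Multiplication table of the algebra `𝐀13` (entry `(i, j)` is `eᵢ · eⱼ`). -/
def tblA13 : Fin 5 → Fin 5 → Vn 5 :=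
  ![![0, e 4, 0, 0, 0],
   ![e 4, 0, 0, 0, 0],
   ![0, 0, e 3, e 4, 0],
   ![0, 0, e 4, 0, 0],
   ![0, 0, 0, 0, 0]]

/-- Multiplication table of the algebra `𝐀12` (entry `(i, j)` is `eᵢ · eⱼ`). -/
def tblA12 : Fin 5 → Fin 5 → Vn 5 :=
  ![![0, e 3, e 4, 0, 0],
   ![e 3, 0, 0, 0, 0],
   ![e 4, 0, 0, 0, 0],
   ![0, 0, 0, 0, 0],
   ![0, 0, 0, 0, 0]]

/-! ### Auxiliary material

The key invariant: an algebra structure `ν` lies in the set `Q` if there is a nonzero linear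
functional `φ` (encoded by its coefficient vector `a`) and a nonzero vector `w` such that
`ν(ker φ, V) ⊆ ℂ w`.  For `𝐀13` one can take `φ = e₃*` and `w = e₅`; this property is preserved
by the `GL₅`-action and (by a compactness argument on the unit spheres) by limits, while `𝐀12`
does not satisfy it. -/

/-- The linear functional on `ℂ⁵` with coefficient vector `a`. -/
noncomputable def phi (a x : Vn 5) : ℂ := ∑ k, a k * x k

lemma basis_expand (x : Vn 5) : x = ∑ k, x k • e k := by
  funext j
  simp [e, Pi.single_apply, Finset.sum_apply]

lemma phi_apply_e (a : Vn 5) (k : Fin 5) : phi a (e k) = a k := by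
  simp [phi, e, Pi.single_apply]

lemma phi_sub_smul (a : Vn 5) (s t : ℂ) (p q : Vn 5) :
    phi a (s • p - t • q) = s * phi a p - t * phi a q := by
  simp only [phi, Pi.sub_apply, Pi.smul_apply, smul_eq_mul, mul_sub,
    Finset.sum_sub_distrib, Finset.mul_sum]
  congr 1 <;> exact Finset.sum_congr rfl fun k _ => by ring

lemma phi_smul (c : ℂ) (a x : Vn 5) : phi (c • a) x = c * phi a x := by
  simp [phi, Finset.mul_sum, mul_assoc]

lemma cont_phi (x : Vn 5) : Continuous (fun a : Vn 5 => phi a x) := by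
  unfold phi
  exact continuous_finset_sum _ fun k _ => (continuous_apply k).mul continuous_const

/-- Bilinear expansion of a product in terms of the basis. -/
lemma mu_expand (μ : Bil 5) (p q : Vn 5) :
    μ p q = ∑ k : Fin 5, ∑ l : Fin 5, (p k * q l) • μ (e k) (e l) := by
  conv_lhs => rw [basis_expand p, basis_expand q]
  simp only [map_sum, map_smul, ContinuousLinearMap.sum_apply,
    ContinuousLinearMap.smul_apply, Finset.smul_sum, smul_smul]
  rw [Finset.sum_comm]
  exact Finset.sum_congr rfl fun k _ => Finset.sum_congr rfl fun l _ => by rw [mul_comm]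

/-- Closed formula for the multiplication of `𝐀13`. -/
lemma mu_eq (μ : Bil 5) (hμ : ∀ i j : Fin 5, μ (e i) (e j) = tblA13 i j) (p q : Vn 5) :
    μ p q = (p 2 * q 2) • e 3 + (p 0 * q 1 + p 1 * q 0 + p 2 * q 3 + p 3 * q 2) • e 4 := by
  rw [mu_expand μ p q]
  simp only [hμ, tblA13, Fin.sum_univ_five]
  simp [Matrix.vecHead, Matrix.vecTail]
  module

/-- The separating invariant: there exist a unit coefficient vector `a` and a unit vector `w`
such that `ν(v, y)` is proportional to `w` whenever `φ_a(v) = 0`; the kernel condition is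
encoded equationally via `v = φ_a(x') • x - φ_a(x) • x'`. -/
def Q (ν : Bil 5) : Prop := ∃ a w : Vn 5, ‖a‖ = 1 ∧ ‖w‖ = 1 ∧
  ∀ x x' y : Vn 5, ∀ i j : Fin 5,
    (ν (phi a x' • x - phi a x • x') y) i * w j
      = (ν (phi a x' • x - phi a x • x') y) j * w i

/-- Every algebra in the orbit of `𝐀13` satisfies the invariant `Q`. -/
lemma orbit_Q (μ : Bil 5) (hμ : ∀ i j : Fin 5, μ (e i) (e j) = tblA13 i j)
    (g : Vn 5 ≃L[ℂ] Vn 5) : Q (act g μ) := by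
  classical
  set b : Vn 5 := fun k => (g.symm (e k)) 2 with hb_def
  have hphi : ∀ x : Vn 5, phi b x = (g.symm x) 2 := by
    intro x
    conv_rhs => rw [basis_expand x]
    rw [map_sum]
    simp only [Finset.sum_apply, Pi.smul_apply, map_smul, smul_eq_mul]
    exact Finset.sum_congr rfl fun k _ => by rw [hb_def, mul_comm]
  have hb0 : b ≠ 0 := by
    intro h0
    have h1 := hphi (g (e 2))
    rw [h0] at h1
    simp only [phi, Pi.zero_apply, zero_mul, Finset.sum_const_zero] at h1
    rw [g.symm_apply_apply] at h1
    simp [e, Pi.single_apply] at h1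
  set w' : Vn 5 := g (e 4) with hw'_def
  have hw'0 : w' ≠ 0 := by
    intro h0
    have : e 4 = 0 := by
      have := congrArg g.symm h0
      simpa [hw'_def, g.symm_apply_apply] using this
    have h2 := congrFun this 4
    simp [e, Pi.single_apply] at h2
  have hbn : ‖b‖ ≠ 0 := norm_ne_zero_iff.mpr hb0
  have hwn : ‖w'‖ ≠ 0 := norm_ne_zero_iff.mpr hw'0
  refine ⟨(‖b‖⁻¹ : ℂ) • b, (‖w'‖⁻¹ : ℂ) • w', ?_, ?_, ?_⟩
  · rw [norm_smul]
    simp [hbn]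
  · rw [norm_smul]
    simp [hwn]
  · intro x x' y i j
    set a : Vn 5 := (‖b‖⁻¹ : ℂ) • b with ha_def
    set v : Vn 5 := phi a x' • x - phi a x • x' with hv_def
    have hv2 : (g.symm v) 2 = 0 := by
      rw [← hphi v, hv_def, phi_sub_smul, ha_def, phi_smul, phi_smul]
      ring
    have key := mu_eq μ hμ (g.symm v) (g.symm y)
    rw [hv2, zero_mul, zero_smul, zero_add] at key
    obtain ⟨t, ht⟩ : ∃ t : ℂ, act g μ v y = t • w' :=
      ⟨_, by rw [act_apply, key, map_smul]⟩
    rw [ht]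
    simp only [Pi.smul_apply, smul_eq_mul]
    ring

/-- Joint continuity of the expressions appearing in `Q`. -/
lemma contQ (x x' y : Vn 5) (i j : Fin 5) :
    Continuous (fun t : (Vn 5 × Vn 5) × Bil 5 =>
      (t.2 (phi t.1.1 x' • x - phi t.1.1 x • x') y) i * t.1.2 j) := by
  have ha : Continuous (fun t : (Vn 5 × Vn 5) × Bil 5 => t.1.1) :=
    continuous_fst.fst
  have h1 : Continuous (fun t : (Vn 5 × Vn 5) × Bil 5 =>
      phi t.1.1 x' • x - phi t.1.1 x • x') :=
    (((cont_phi x').comp ha).smul continuous_const).sub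
      (((cont_phi x).comp ha).smul continuous_const)
  have heval : Continuous (fun p : (Vn 5 →L[ℂ] Vn 5 →L[ℂ] Vn 5) × Vn 5 => p.1 p.2) :=
    isBoundedBilinearMap_apply.continuous
  have heval2 : Continuous (fun p : (Vn 5 →L[ℂ] Vn 5) × Vn 5 => p.1 p.2) :=
    isBoundedBilinearMap_apply.continuous
  have h2 : Continuous (fun t : (Vn 5 × Vn 5) × Bil 5 =>
      t.2 (phi t.1.1 x' • x - phi t.1.1 x • x')) :=
    heval.comp (continuous_snd.prodMk h1)
  have h3 : Continuous (fun t : (Vn 5 × Vn 5) × Bil 5 =>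
      t.2 (phi t.1.1 x' • x - phi t.1.1 x • x') y) :=
    heval2.comp (h2.prodMk continuous_const)
  exact ((continuous_apply i).comp h3).mul
    ((continuous_apply j).comp continuous_fst.snd)

set_option synthInstance.maxHeartbeats 1000000 in
/-- The invariant `Q` passes to limits (by compactness of the unit spheres). -/
lemma Q_closed (lam : Bil 5) (s : Set (Bil 5)) (hs : ∀ ν ∈ s, Q ν)
    (hmem : lam ∈ closure s) : Q lam := by
  haveI : TopologicalSpace.PseudoMetrizableSpace (Bil 5) :=
    inferInstance
  haveI : FrechetUrysohnSpace (Bil 5) :=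
    FirstCountableTopology.frechetUrysohnSpace
  obtain ⟨u, humem, hulim⟩ := mem_closure_iff_seq_limit.mp hmem
  have hQ : ∀ n, Q (u n) := fun n => hs _ (humem n)
  choose as ws ha hw hpar using hQ
  have hcpt : IsCompact ((Metric.sphere (0:Vn 5) 1) ×ˢ (Metric.sphere (0:Vn 5) 1)) :=
    (isCompact_sphere 0 1).prod (isCompact_sphere 0 1)
  have hsmem : ∀ n, (as n, ws n) ∈
      (Metric.sphere (0:Vn 5) 1) ×ˢ (Metric.sphere (0:Vn 5) 1) := fun n =>
    Set.mk_mem_prod (mem_sphere_zero_iff_norm.mpr (ha n))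
      (mem_sphere_zero_iff_norm.mpr (hw n))
  obtain ⟨p, hpmem, ψ, hψ, hplim⟩ := hcpt.tendsto_subseq hsmem
  refine ⟨p.1, p.2, ?_, ?_, ?_⟩
  · exact mem_sphere_zero_iff_norm.mp hpmem.1
  · exact mem_sphere_zero_iff_norm.mp hpmem.2
  · intro x x' y i j
    have ht : Filter.Tendsto
        (fun n => (((as (ψ n), ws (ψ n)), u (ψ n)) : (Vn 5 × Vn 5) × Bil 5))
        Filter.atTop (nhds ((p.1, p.2), lam)) := by
      have h1 : Filter.Tendsto (fun n => ((as (ψ n), ws (ψ n)) : Vn 5 × Vn 5))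
          Filter.atTop (nhds (p.1, p.2)) := by exact hplim
      exact h1.prodMk_nhds (hulim.comp hψ.tendsto_atTop)
    have h1 := ((contQ x x' y i j).tendsto (((p.1, p.2), lam) : (Vn 5 × Vn 5) × Bil 5)).comp ht
    have h2 := ((contQ x x' y j i).tendsto (((p.1, p.2), lam) : (Vn 5 × Vn 5) × Bil 5)).comp ht
    have heq : (fun n => (u (ψ n) (phi (as (ψ n)) x' • x - phi (as (ψ n)) x • x') y) i
        * ws (ψ n) j)
        = fun n => (u (ψ n) (phi (as (ψ n)) x' • x - phi (as (ψ n)) x • x') y) j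
        * ws (ψ n) i := funext fun n => hpar (ψ n) x x' y i j
    have h1' : Filter.Tendsto
        (fun n => (u (ψ n) (phi (as (ψ n)) x' • x - phi (as (ψ n)) x • x') y) i
          * ws (ψ n) j) Filter.atTop
        (nhds ((lam (phi p.1 x' • x - phi p.1 x • x') y) i * p.2 j)) := h1
    have h2' : Filter.Tendsto
        (fun n => (u (ψ n) (phi (as (ψ n)) x' • x - phi (as (ψ n)) x • x') y) j
          * ws (ψ n) i) Filter.atTop
        (nhds ((lam (phi p.1 x' • x - phi p.1 x • x') y) j * p.2 i)) := h2
    rw [heq] at h1'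
    exact tendsto_nhds_unique h1' h2'

/-- If `c • e m` is "parallel" to `w` with `c ≠ 0` then `w j = 0` for `j ≠ m`. -/
lemma par_single {c : ℂ} (hc : c ≠ 0) (m : Fin 5) (w : Vn 5)
    (h : ∀ i j : Fin 5, (c • e m) i * w j = (c • e m) j * w i) :
    ∀ j, j ≠ m → w j = 0 := by
  intro j hj
  have h1 := h m j
  simp [e, Pi.single_apply, hj] at h1
  rcases h1 with h1 | h1
  · exact absurd h1 hc
  · exact h1

/-- The algebra `𝐀12` does not satisfy the invariant `Q`. -/
lemma not_Q_lam (lam : Bil 5) (hlam : ∀ i j : Fin 5, lam (e i) (e j) = tblA12 i j) :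
    ¬ Q lam := by
  rintro ⟨a, w, ha, hw, hpar⟩
  have ha0 : a ≠ 0 := by intro h; rw [h, norm_zero] at ha; exact one_ne_zero ha.symm
  obtain ⟨k₀, hk₀⟩ : ∃ k, a k ≠ 0 := by
    by_contra h
    push_neg at h
    exact ha0 (funext h)
  have main : ∃ c : ℂ, c ≠ 0 ∧
      (∀ i j : Fin 5, (c • e 3 : Vn 5) i * w j = (c • e 3 : Vn 5) j * w i) ∧
      (∀ i j : Fin 5, (c • e 4 : Vn 5) i * w j = (c • e 4 : Vn 5) j * w i) := by
    by_cases h0 : a 0 = 0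
    · refine ⟨a k₀, hk₀, ?_, ?_⟩
      · intro i j
        have h := hpar (e 0) (e k₀) (e 1) i j
        rw [phi_apply_e, phi_apply_e, h0, zero_smul, sub_zero, map_smul,
          ContinuousLinearMap.smul_apply, hlam] at h
        simpa [tblA12, Matrix.vecHead, Matrix.vecTail] using h
      · intro i j
        have h := hpar (e 0) (e k₀) (e 2) i j
        rw [phi_apply_e, phi_apply_e, h0, zero_smul, sub_zero, map_smul,
          ContinuousLinearMap.smul_apply, hlam] at h
        simpa [tblA12, Matrix.vecHead, Matrix.vecTail] using h
    · refine ⟨a 0, h0, ?_, ?_⟩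
      · intro i j
        have h := hpar (e 1) (e 0) (e 0) i j
        rw [phi_apply_e, phi_apply_e, map_sub, map_smul, map_smul,
          ContinuousLinearMap.sub_apply, ContinuousLinearMap.smul_apply,
          ContinuousLinearMap.smul_apply, hlam, hlam] at h
        simpa [tblA12, Matrix.vecHead, Matrix.vecTail] using h
      · intro i j
        have h := hpar (e 2) (e 0) (e 0) i j
        rw [phi_apply_e, phi_apply_e, map_sub, map_smul, map_smul,
          ContinuousLinearMap.sub_apply, ContinuousLinearMap.smul_apply,
          ContinuousLinearMap.smul_apply, hlam, hlam] at h
        simpa [tblA12, Matrix.vecHead, Matrix.vecTail] using h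
  obtain ⟨c, hc, h3, h4⟩ := main
  have hwz : w = 0 := by
    funext j
    by_cases hj : j = 3
    · subst hj
      exact par_single hc 4 w h4 3 (by decide)
    · exact par_single hc 3 w h3 j hj
  rw [hwz, norm_zero] at hw
  exact one_ne_zero hw.symm

/-- The $5$-dimensional nilpotent commutative associative algebra `𝐀13` does not degenerate to
`𝐀12`: the structure `λ` of `𝐀12` does NOT lie in the closure of
the `GL(5, ℂ)`-orbit `O(μ)` of the structure `μ` of `𝐀13`. -/
theorem A13_not_deg_A12 (μ lam : Bil 5)
    (hμ : ∀ i j : Fin 5, μ (e i) (e j) = tblA13 i j)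
    (hlam : ∀ i j : Fin 5, lam (e i) (e j) = tblA12 i j) :
    lam ∉ closure (orbit μ) := by
  intro hmem
  have hQ : ∀ ν ∈ orbit μ, Q ν := by
    rintro ν ⟨g, rfl⟩
    exact orbit_Q μ hμ g
  exact not_Q_lam lam hlam (Q_closed lam (orbit μ) hQ hmem)
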